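/- Continuity of GraphFlow: let M and M' be marginal cost vectors with |M¹ − M'¹| ≤ ε and Mʲ = M'ʲ for j > 1, and let (f, w), (f', w') be the corresponding GraphFlow outputs (equilibrium flows with marginal-cost conditions as in Claim 3.1). Suppose on [0,V] every cost function satisfies l_e'(x) ≥ 1/Ψ and Ψ ≥ l_e(x), l_e'(x). Then for every player i and edge e, |f_e^i − f_e'^i| ≤ 2nΨε, and hence each demand satisfies |w_i − w_i'| ≤ 2mnΨε. -/

import Mathlib

/-- Pointwise key estimate: if `a` satisfies the equality condition and `b` the
inequality condition, with the sum side ordered suitably, then `a - b ≤ Ψ * ε`. -/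
lemma graphflow_aux {Ψ ε la lb la' lb' a b Ma Mb : ℝ}
    (hΨ : 0 < Ψ) (hε : 0 ≤ ε)
    (hlb' : 1 / Ψ ≤ lb') (hl' : lb' ≤ la') (hl : lb ≤ la)
    (ha : 0 ≤ a) (hb : 0 ≤ b)
    (hMa : a = 0 → Ma ≤ la + a * la') (hMa' : 0 < a → la + a * la' = Ma)
    (hMb : Mb ≤ lb + b * lb')
    (hM : Ma - Mb ≤ ε) : a - b ≤ Ψ * ε := by
  rcases le_or_gt a b with h | h
  · have : 0 ≤ Ψ * ε := mul_nonneg hΨ.le hε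
    linarith
  · have hapos : 0 < a := lt_of_le_of_lt hb h
    have heq : la + a * la' = Ma := hMa' hapos
    have hlb'pos : 0 < lb' := lt_of_lt_of_le (by positivity) hlb'
    have h1 : a * lb' ≤ a * la' := by nlinarith
    have h2 : (a - b) * lb' ≤ Ma - Mb := by nlinarith
    have h3 : (a - b) * lb' ≤ ε := le_trans h2 hM
    have h4 : 1 ≤ Ψ * lb' := by
      rw [div_le_iff₀ hΨ] at hlb'; linarith [hlb']
    nlinarith [mul_pos hΨ hlb'pos]


/-- Claim 3.5 (continuity of GraphFlow): if two marginal cost vectors differ only in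
the first coordinate, by at most `ε`, then the corresponding GraphFlow flows differ
by at most `2nΨε` on each edge and the demands by at most `2mnΨε`. -/
theorem graphflow_continuous
    (m n : ℕ) (hn : 0 < n) (V Ψ ε : ℝ) (hΨ : 0 < Ψ) (hε : 0 ≤ ε)
    (l : Fin m → ℝ → ℝ)
    (hl_mono : ∀ e, StrictMono (l e))
    (hl_conv : ∀ e, ConvexOn ℝ Set.univ (l e))
    (hl_diff : ∀ e, Differentiable ℝ (l e))
    -- bounds on the cost functions on [0, V]
    (hl_lb : ∀ e, ∀ x ∈ Set.Icc (0 : ℝ) V, 1 / Ψ ≤ deriv (l e) x)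
    (hl_ub : ∀ e, ∀ x ∈ Set.Icc (0 : ℝ) V, l e x ≤ Ψ ∧ deriv (l e) x ≤ Ψ)
    (L : (Fin m → Fin n → ℝ) → Fin m → Fin n → ℝ)
    (hL : ∀ f e i, L f e i =
      l e (∑ j, f e j) + f e i * deriv (l e) (∑ j, f e j))
    (p1 : Fin n) (hp1 : p1 = ⟨0, hn⟩)
    (M M' : Fin n → ℝ) (hM1 : |M p1 - M' p1| ≤ ε) (hMi : ∀ i ≠ p1, M' i = M i)
    (f f' : Fin m → Fin n → ℝ) (w w' : Fin n → ℝ)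
    -- GraphFlow output conditions for (f, w) with marginal costs M
    (hf_nonneg : ∀ e i, 0 ≤ f e i) (hw : ∀ i, w i = ∑ e, f e i)
    (hftot : ∀ e, (∑ j, f e j) ∈ Set.Icc (0 : ℝ) V)
    (hf0 : ∀ e i, f e i = 0 → M i ≤ L f e i)
    (hfpos : ∀ e i, 0 < f e i → L f e i = M i)
    -- GraphFlow output conditions for (f', w') with marginal costs M'
    (hf'_nonneg : ∀ e i, 0 ≤ f' e i) (hw' : ∀ i, w' i = ∑ e, f' e i)
    (hf'tot : ∀ e, (∑ j, f' e j) ∈ Set.Icc (0 : ℝ) V)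
    (hf'0 : ∀ e i, f' e i = 0 → M' i ≤ L f' e i)
    (hf'pos : ∀ e i, 0 < f' e i → L f' e i = M' i) :
    (∀ e i, |f e i - f' e i| ≤ 2 * n * Ψ * ε) ∧
    (∀ i, |w i - w' i| ≤ 2 * m * n * Ψ * ε) := by
  have hn1 : (1 : ℝ) ≤ n := by exact_mod_cast hn
  have hΨε : 0 ≤ Ψ * ε := mul_nonneg hΨ.le hε
  -- bound on marginal cost differences, both directions
  have hMd : ∀ i, M i - M' i ≤ ε ∧ M' i - M i ≤ ε := by
    intro i
    by_cases hi : i = p1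
    · subst hi; constructor <;> [linarith [abs_le.mp hM1 |>.2]; linarith [abs_le.mp hM1 |>.1]]
    · rw [hMi i hi]; constructor <;> linarith
  -- derivative monotonicity
  have hderiv_mono : ∀ e, Monotone (deriv (l e)) := by
    intro e
    have := (hl_conv e).monotoneOn_deriv (fun x _ => (hl_diff e).differentiableAt)
    exact fun x y hxy => this (Set.mem_univ x) (Set.mem_univ y) hxy
  -- per-edge dichotomy with sum ordering
  have key : ∀ e, ((∑ j, f' e j) ≤ (∑ j, f e j) ∧ ∀ j, f e j - f' e j ≤ Ψ * ε) ∨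
      ((∑ j, f e j) ≤ (∑ j, f' e j) ∧ ∀ j, f' e j - f e j ≤ Ψ * ε) := by
    intro e
    rcases le_total (∑ j, f' e j) (∑ j, f e j) with hS | hS
    · left
      refine ⟨hS, fun i => ?_⟩
      have hL1 := hL f e i
      have hL2 := hL f' e i
      refine graphflow_aux hΨ hε (hl_lb e _ (hf'tot e))
        (hderiv_mono e hS) ((hl_mono e).monotone hS)
        (hf_nonneg e i) (hf'_nonneg e i) ?_ ?_ ?_ (hMd i).1
      · intro h0; have := hf0 e i h0; rw [hL1] at this; linarith
      · intro hpos; have := hfpos e i hpos; rw [hL1] at this; linarith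
      · rcases eq_or_lt_of_le (hf'_nonneg e i) with h0 | hpos
        · have := hf'0 e i h0.symm; rw [hL2] at this; linarith
        · have := hf'pos e i hpos; rw [hL2] at this; linarith
    · right
      refine ⟨hS, fun j => ?_⟩
      have hL1 := hL f' e j
      have hL2 := hL f e j
      refine graphflow_aux hΨ hε (hl_lb e _ (hftot e))
        (hderiv_mono e hS) ((hl_mono e).monotone hS)
        (hf'_nonneg e j) (hf_nonneg e j) ?_ ?_ ?_ (hMd j).2
      · intro h0; have := hf'0 e j h0; rw [hL1] at this; linarith
      · intro hpos; have := hf'pos e j hpos; rw [hL1] at this; linarith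
      · rcases eq_or_lt_of_le (hf_nonneg e j) with h0 | hpos
        · have := hf0 e j h0.symm; rw [hL2] at this; linarith
        · have := hfpos e j hpos; rw [hL2] at this; linarith
  -- one-sided combination lemma
  have comb : ∀ (a b : Fin n → ℝ), (∑ j, b j) ≤ (∑ j, a j) →
      (∀ j, a j - b j ≤ Ψ * ε) → ∀ i,
      a i - b i ≤ 2 * n * Ψ * ε ∧ b i - a i ≤ 2 * n * Ψ * ε := by
    intro a b hS h i
    have hbig : Ψ * ε ≤ 2 * n * Ψ * ε := by nlinarith
    constructor
    · linarith [h i]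
    · have hsum : ∑ j, (a j - b j) = (∑ j, a j) - (∑ j, b j) :=
        Finset.sum_sub_distrib _ _
      have hcard : ((Finset.univ.erase i).card : ℝ) = n - 1 := by
        rw [Finset.card_erase_of_mem (Finset.mem_univ i), Finset.card_univ,
          Fintype.card_fin, Nat.cast_sub hn, Nat.cast_one]
      have hrest : ∑ j ∈ Finset.univ.erase i, (a j - b j) ≤ (n - 1) * (Ψ * ε) := by
        calc ∑ j ∈ Finset.univ.erase i, (a j - b j)
            ≤ ∑ _j ∈ Finset.univ.erase i, (Ψ * ε) :=
              Finset.sum_le_sum (fun j _ => h j)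
          _ = ((Finset.univ.erase i).card : ℝ) * (Ψ * ε) := by
              rw [Finset.sum_const, nsmul_eq_mul]
          _ = (n - 1) * (Ψ * ε) := by rw [hcard]
      have hsplit : a i - b i + ∑ j ∈ Finset.univ.erase i, (a j - b j)
          = (∑ j, a j) - (∑ j, b j) := by
        rw [← hsum, ← Finset.add_sum_erase _ _ (Finset.mem_univ i)]
      nlinarith
  have main : ∀ e i, |f e i - f' e i| ≤ 2 * n * Ψ * ε := by
    intro e i
    rw [abs_le]
    rcases key e with ⟨hS, h⟩ | ⟨hS, h⟩
    · obtain ⟨h1, h2⟩ := comb (f e) (f' e) hS h i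
      exact ⟨by linarith, h1⟩
    · obtain ⟨h1, h2⟩ := comb (f' e) (f e) hS h i
      exact ⟨by linarith, h2⟩
  refine ⟨main, fun i => ?_⟩
  have hwi : w i - w' i = ∑ e, (f e i - f' e i) := by
    rw [hw, hw', Finset.sum_sub_distrib]
  rw [hwi]
  calc |∑ e, (f e i - f' e i)| ≤ ∑ e, |f e i - f' e i| := Finset.abs_sum_le_sum_abs _ _
    _ ≤ ∑ _e : Fin m, 2 * n * Ψ * ε := Finset.sum_le_sum (fun e _ => main e i)
    _ = m * (2 * n * Ψ * ε) := by rw [Finset.sum_const, nsmul_eq_mul]; simp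
    _ = 2 * m * n * Ψ * ε := by ring
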